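/- Let a > 0 and n ≥ 1, and let Φ, φ be the standard normal CDF and PDF. Then the change of variables u = n(1 − Φ(a z)) gives the identity ∫_{-∞}^{∞} Φ(a z)^n φ(z) dz = ((2π)^{(1/a² − 1)/2} / (n a)) ∫_0^n (1 − u/n)^n (φ(Φ^{-1}(1 − u/n)))^{1/a² − 1} du. -/

import Mathlib

open MeasureTheory ProbabilityTheory Real Filter Topology

/-- standard normal density -/
noncomputable def stdPDF (x : ℝ) : ℝ := (Real.sqrt (2 * Real.pi))⁻¹ * Real.exp (-(x ^ 2) / 2)

/-- standard normal CDF -/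
noncomputable def stdCDF (x : ℝ) : ℝ := ∫ t in Set.Iic x, stdPDF t

lemma stdPDF_pos (x : ℝ) : 0 < stdPDF x := by
  unfold stdPDF
  positivity

lemma stdPDF_continuous : Continuous stdPDF := by
  unfold stdPDF
  fun_prop

lemma stdPDF_eq : stdPDF = fun x => (Real.sqrt (2 * Real.pi))⁻¹ * Real.exp (-(1/2) * x ^ 2) := by
  funext x
  unfold stdPDF
  ring_nf

lemma stdPDF_integrable : Integrable stdPDF := by
  rw [stdPDF_eq]
  exact (integrable_exp_neg_mul_sq (by norm_num)).const_mul _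

lemma integral_stdPDF : ∫ x, stdPDF x = 1 := by
  rw [stdPDF_eq]
  rw [MeasureTheory.integral_const_mul, integral_gaussian]
  have h2π : (0:ℝ) < 2 * Real.pi := by positivity
  rw [show Real.pi / (1/2) = 2 * Real.pi by ring]
  field_simp

lemma hasDerivAt_stdCDF (x : ℝ) : HasDerivAt stdCDF (stdPDF x) x := by
  have key : ∀ y : ℝ, stdCDF y = stdCDF 0 + ∫ t in (0:ℝ)..y, stdPDF t := by
    intro y
    have := intervalIntegral.integral_Iic_sub_Iic
      (stdPDF_integrable.integrableOn (s := Set.Iic 0))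
      (stdPDF_integrable.integrableOn (s := Set.Iic y)) (μ := volume)
    unfold stdCDF
    linarith [this]
  have h1 : HasDerivAt (fun y => stdCDF 0 + ∫ t in (0:ℝ)..y, stdPDF t) (stdPDF x) x := by
    apply HasDerivAt.const_add
    apply intervalIntegral.integral_hasDerivAt_right
    · exact stdPDF_integrable.intervalIntegrable
    · exact stdPDF_continuous.stronglyMeasurableAtFilter _ _
    · exact stdPDF_continuous.continuousAt
  exact h1.congr_of_eventuallyEq (Eventually.of_forall key)

lemma stdCDF_strictMono : StrictMono stdCDF := by
  apply strictMono_of_deriv_pos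
  intro x
  rw [(hasDerivAt_stdCDF x).deriv]
  exact stdPDF_pos x

lemma stdCDF_continuous : Continuous stdCDF := by
  have : Differentiable ℝ stdCDF := fun x => (hasDerivAt_stdCDF x).differentiableAt
  exact this.continuous

lemma setIntegral_stdPDF_pos {s : Set ℝ} (hs : MeasurableSet s) (hμ : 0 < volume s) :
    0 < ∫ t in s, stdPDF t := by
  rw [setIntegral_pos_iff_support_of_nonneg_ae
    (Eventually.of_forall fun x => (stdPDF_pos x).le) (stdPDF_integrable.integrableOn)]
  have : Function.support stdPDF = Set.univ := by
    ext x; simp [Function.mem_support, (stdPDF_pos x).ne']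
  rw [this, Set.univ_inter]
  exact hμ

lemma stdCDF_mem_Ioo (x : ℝ) : stdCDF x ∈ Set.Ioo (0:ℝ) 1 := by
  constructor
  · exact setIntegral_stdPDF_pos measurableSet_Iic (by simp)
  · have hsum := intervalIntegral.integral_Iic_add_Ioi
      (stdPDF_integrable.integrableOn (s := Set.Iic x))
      (stdPDF_integrable.integrableOn (s := Set.Ioi x)) (μ := volume)
    rw [integral_stdPDF] at hsum
    have hpos : 0 < ∫ t in Set.Ioi x, stdPDF t :=
      setIntegral_stdPDF_pos measurableSet_Ioi (by simp)
    unfold stdCDF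
    linarith

lemma tendsto_stdCDF_atTop : Tendsto stdCDF atTop (𝓝 1) := by
  have h := (MeasureTheory.aecover_Iic (μ := (volume : Measure ℝ))
    (tendsto_id (α := ℝ) (x := atTop))).integral_tendsto_of_countably_generated
    stdPDF_integrable
  rw [integral_stdPDF] at h
  exact h

lemma tendsto_stdCDF_atBot : Tendsto stdCDF atBot (𝓝 0) := by
  have h := (MeasureTheory.aecover_Ioi (μ := (volume : Measure ℝ))
    (tendsto_id (α := ℝ) (x := atBot))).integral_tendsto_of_countably_generated
    stdPDF_integrable
  rw [integral_stdPDF] at h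
  have heq : ∀ x : ℝ, stdCDF x = 1 - ∫ t in Set.Ioi x, stdPDF t := by
    intro x
    have hsum := intervalIntegral.integral_Iic_add_Ioi
      (stdPDF_integrable.integrableOn (s := Set.Iic x))
      (stdPDF_integrable.integrableOn (s := Set.Ioi x)) (μ := volume)
    rw [integral_stdPDF] at hsum
    unfold stdCDF
    linarith
  have : Tendsto (fun x : ℝ => 1 - ∫ t in Set.Ioi x, stdPDF t) atBot (𝓝 (1 - 1)) :=
    (tendsto_const_nhds).sub h
  rw [sub_self] at this
  exact this.congr fun x => (heq x).symm

lemma stdCDF_surj {v : ℝ} (hv : v ∈ Set.Ioo (0:ℝ) 1) : ∃ z, stdCDF z = v := by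
  obtain ⟨x₀, hx₀⟩ := (tendsto_stdCDF_atBot.eventually_lt_const hv.1).exists
  obtain ⟨x₁, hx₁⟩ := (tendsto_stdCDF_atTop.eventually_const_lt hv.2).exists
  have hle : x₀ ≤ x₁ := by
    by_contra hcon
    push_neg at hcon
    exact absurd (stdCDF_strictMono hcon) (by linarith)
  obtain ⟨z, _, hz⟩ := intermediate_value_Icc hle stdCDF_continuous.continuousOn
    ⟨hx₀.le, hx₁.le⟩
  exact ⟨z, hz⟩

lemma stdPDF_rpow_identity (a : ℝ) (ha : 0 < a) (z : ℝ) :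
    (2 * Real.pi) ^ ((1 / a ^ 2 - 1) / 2) * (stdPDF (a * z)) ^ (1 / a ^ 2 - 1)
      * stdPDF (a * z) = stdPDF z := by
  have h2π : (0:ℝ) < 2 * Real.pi := by positivity
  have ha' : a ≠ 0 := ha.ne'
  have hexp : ∀ y cc : ℝ, Real.exp y ^ cc = Real.exp (y * cc) := by
    intro y cc
    rw [Real.rpow_def_of_pos (Real.exp_pos _), Real.log_exp]
  have key : ∀ x : ℝ, stdPDF x
      = Real.exp (Real.log (2 * Real.pi) * (-(1/2)) + -(x ^ 2) / 2) := by
    intro x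
    unfold stdPDF
    rw [Real.sqrt_eq_rpow, ← Real.rpow_neg h2π.le, Real.rpow_def_of_pos h2π, Real.exp_add]
  rw [key, key, Real.rpow_def_of_pos h2π, hexp, ← Real.exp_add, ← Real.exp_add]
  congr 1
  field_simp
  ring

/-- change of variables u = n(1 − Φ(az)) gives
∫ Φ(az)^n φ(z) dz = ((2π)^{(1/a²−1)/2}/(na)) ∫_0^n (1−u/n)^n (φ(Φ⁻¹(1−u/n)))^{1/a²−1} du. -/
theorem stmt_6 (a : ℝ) (ha : 0 < a) (n : ℕ) (hn : 1 ≤ n)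
    (Φinv : ℝ → ℝ) (hΦinv : ∀ v ∈ Set.Ioo (0:ℝ) 1, stdCDF (Φinv v) = v) :
    ∫ z, (stdCDF (a * z)) ^ n * stdPDF z =
      (2 * Real.pi) ^ ((1 / a ^ 2 - 1) / 2) / (n * a) *
        ∫ u in (0:ℝ)..(n:ℝ),
          (1 - u / n) ^ n * (stdPDF (Φinv (1 - u / n))) ^ (1 / a ^ 2 - 1) := by
  have h2π : (0:ℝ) < 2 * Real.pi := by positivity
  have ha' : a ≠ 0 := ha.ne'
  have hn0 : (n:ℝ) ≠ 0 := Nat.cast_ne_zero.mpr (by omega)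
  set c : ℝ := 1 / a ^ 2 - 1 with hc
  set H : ℝ → ℝ := fun v => v ^ n * (stdPDF (Φinv v)) ^ c with hH
  set g : ℝ → ℝ := fun z => stdCDF (a * z) with hg
  have hfix : ∀ x : ℝ, Φinv (stdCDF x) = x := fun x =>
    stdCDF_strictMono.injective (hΦinv _ (stdCDF_mem_Ioo x))
  have hg' : ∀ x : ℝ, HasDerivAt g (stdPDF (a * x) * a) x := by
    intro x
    have hinner : HasDerivAt (fun y : ℝ => a * y) a x := by
      simpa using (hasDerivAt_id x).const_mul a
    exact (hasDerivAt_stdCDF (a * x)).comp x hinner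
  have hginj : Function.Injective g := by
    intro x y hxy
    exact mul_left_cancel₀ ha' (stdCDF_strictMono.injective hxy)
  have hrange : g '' Set.univ = Set.Ioo (0:ℝ) 1 := by
    rw [Set.image_univ]
    ext v
    constructor
    · rintro ⟨z, rfl⟩; exact stdCDF_mem_Ioo _
    · intro hv
      obtain ⟨z, hz⟩ := stdCDF_surj hv
      exact ⟨z / a, by simp only [hg, mul_div_cancel₀ _ ha', hz]⟩
  have hCoV := MeasureTheory.integral_image_eq_integral_abs_deriv_smul
      (MeasurableSet.univ) (fun x _ => (hg' x).hasDerivWithinAt) (hginj.injOn) H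
  rw [hrange] at hCoV
  have hpoint : ∀ z : ℝ, (2 * Real.pi) ^ (c / 2) / a * (|stdPDF (a * z) * a| • H (g z))
      = (stdCDF (a * z)) ^ n * stdPDF z := by
    intro z
    have habs : |stdPDF (a * z) * a| = stdPDF (a * z) * a :=
      abs_of_pos (mul_pos (stdPDF_pos _) ha)
    have hid := stdPDF_rpow_identity a ha z
    rw [← hc] at hid
    rw [smul_eq_mul, habs]
    simp only [hH, hg, hfix]
    rw [div_mul_eq_mul_div, div_eq_iff ha']
    linear_combination ((stdCDF (a * z)) ^ n * a) * hid
  have hLHS : ∫ z, (stdCDF (a * z)) ^ n * stdPDF z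
      = (2 * Real.pi) ^ (c / 2) / a * ∫ v in Set.Ioo (0:ℝ) 1, H v := by
    have hfun : (fun z => (stdCDF (a * z)) ^ n * stdPDF z)
        = fun z => (2 * Real.pi) ^ (c / 2) / a * (|stdPDF (a * z) * a| • H (g z)) :=
      funext fun z => (hpoint z).symm
    rw [hfun, MeasureTheory.integral_const_mul]
    congr 1
    rw [hCoV, MeasureTheory.setIntegral_univ]
  have hRHS : (∫ u in (0:ℝ)..(n:ℝ), (1 - u / n) ^ n * (stdPDF (Φinv (1 - u / n))) ^ c)
      = (n:ℝ) * ∫ v in Set.Ioo (0:ℝ) 1, H v := by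
    have hsub := intervalIntegral.integral_comp_sub_div (a := (0:ℝ)) (b := (n:ℝ)) H hn0 1
    have h1 : (1:ℝ) - (n:ℝ) / n = 0 := by field_simp; norm_num
    have h2 : (1:ℝ) - (0:ℝ) / n = 1 := by norm_num
    rw [h1, h2] at hsub
    have : (∫ u in (0:ℝ)..(n:ℝ), (1 - u / n) ^ n * (stdPDF (Φinv (1 - u / n))) ^ c)
        = ∫ u in (0:ℝ)..(n:ℝ), H (1 - u / n) := rfl
    rw [this, hsub, smul_eq_mul]
    congr 1
    rw [intervalIntegral.integral_of_le zero_le_one, MeasureTheory.integral_Ioc_eq_integral_Ioo]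
  rw [hLHS, hRHS]
  field_simp
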